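/- Let m ∈ ℝ, σ > 0, and y ∈ ℝ. Let Φ and φ denote the cumulative distribution function and probability density function of the standard normal distribution N(0,1), and set z := (y − m)/σ. Then the Continuous Ranked Probability Score of the Gaussian N(m, σ²) evaluated at y satisfies ∫_ℝ (Φ((t − m)/σ) − 1_{t ≥ y})² dt = σ · ( z·(2Φ(z) − 1) + 2φ(z) − 1/√π ). -/

import Mathlib

open MeasureTheory Real Set Filter Topology

/-- The probability density function of the standard normal distribution `N(0,1)`. -/
noncomputable def stdNormalPDF (u : ℝ) : ℝ :=
  Real.exp (-u ^ 2 / 2) / Real.sqrt (2 * Real.pi)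

/-- The cumulative distribution function of the standard normal distribution `N(0,1)`. -/
noncomputable def stdNormalCDF (z : ℝ) : ℝ :=
  ∫ u in Set.Iic z, stdNormalPDF u

namespace CRPSAux

lemma pdf_nonneg (u : ℝ) : 0 ≤ stdNormalPDF u :=
  div_nonneg (exp_nonneg _) (Real.sqrt_nonneg _)

lemma pdf_continuous : Continuous stdNormalPDF := by
  unfold stdNormalPDF
  fun_prop

lemma sqrt_two_pi_pos : 0 < Real.sqrt (2 * Real.pi) :=
  Real.sqrt_pos.mpr (by positivity)

lemma pdf_integrable : Integrable stdNormalPDF := by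
  have h : Integrable (fun u : ℝ => Real.exp (-(1/2 : ℝ) * u ^ 2)) :=
    integrable_exp_neg_mul_sq (by norm_num)
  have := h.div_const (Real.sqrt (2 * Real.pi))
  convert this using 2 with u
  unfold stdNormalPDF
  ring_nf

lemma integral_pdf : ∫ u : ℝ, stdNormalPDF u = 1 := by
  have h : ∫ u : ℝ, Real.exp (-(1/2 : ℝ) * u ^ 2) = Real.sqrt (Real.pi / (1/2)) :=
    integral_gaussian (1/2)
  have h2 : ∫ u : ℝ, stdNormalPDF u
      = (∫ u : ℝ, Real.exp (-(1/2 : ℝ) * u ^ 2)) / Real.sqrt (2 * Real.pi) := by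
    rw [← integral_div]
    congr 1 with u
    unfold stdNormalPDF
    ring_nf
  rw [h2, h]
  rw [div_eq_one_iff_eq (ne_of_gt sqrt_two_pi_pos)]
  congr 1
  ring


/-- the constant in our exponential tail bound -/
noncomputable def C : ℝ := Real.exp (1/2) / Real.sqrt (2 * Real.pi)

lemma C_pos : 0 < C := div_pos (exp_pos _) sqrt_two_pi_pos

lemma pdf_le_exp (u : ℝ) : stdNormalPDF u ≤ C * Real.exp u := by
  unfold stdNormalPDF C
  rw [div_mul_eq_mul_div, div_le_div_iff_of_pos_right sqrt_two_pi_pos, ← Real.exp_add]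
  apply Real.exp_le_exp.mpr
  nlinarith [sq_nonneg (u + 1)]

lemma pdf_le_exp_neg (u : ℝ) : stdNormalPDF u ≤ C * Real.exp (-u) := by
  have := pdf_le_exp (-u)
  simpa [stdNormalPDF, neg_pow] using this

lemma cdf_nonneg (z : ℝ) : 0 ≤ stdNormalCDF z :=
  setIntegral_nonneg measurableSet_Iic fun u _ => pdf_nonneg u

lemma cdf_le (z : ℝ) : stdNormalCDF z ≤ C * Real.exp z := by
  have h1 : stdNormalCDF z ≤ ∫ u in Set.Iic z, C * Real.exp u := by
    apply setIntegral_mono_on (pdf_integrable.integrableOn)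
      (((integrableOn_exp_Iic z).const_mul C)) measurableSet_Iic
    intro u _
    exact pdf_le_exp u
  calc stdNormalCDF z ≤ ∫ u in Set.Iic z, C * Real.exp u := h1
    _ = C * Real.exp z := by rw [integral_const_mul, integral_exp_Iic]

lemma one_sub_cdf (z : ℝ) : 1 - stdNormalCDF z = ∫ u in Set.Ioi z, stdNormalPDF u := by
  have := intervalIntegral.integral_Iic_add_Ioi (b := z) pdf_integrable.integrableOn pdf_integrable.integrableOn
  rw [integral_pdf] at this
  unfold stdNormalCDF
  linarith

lemma one_sub_cdf_le (z : ℝ) : 1 - stdNormalCDF z ≤ C * Real.exp (-z) := by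
  rw [one_sub_cdf]
  have h1 : (∫ u in Set.Ioi z, stdNormalPDF u) ≤ ∫ u in Set.Ioi z, C * Real.exp (-u) := by
    apply setIntegral_mono_on (pdf_integrable.integrableOn)
      (((exp_neg_integrableOn_Ioi z one_pos).congr_fun (fun x _ => by rw [neg_one_mul]) measurableSet_Ioi).const_mul C) measurableSet_Ioi
    intro u _
    exact pdf_le_exp_neg u
  calc (∫ u in Set.Ioi z, stdNormalPDF u) ≤ ∫ u in Set.Ioi z, C * Real.exp (-u) := h1
    _ = C * Real.exp (-z) := by rw [integral_const_mul, integral_exp_neg_Ioi]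

lemma cdf_le_one (z : ℝ) : stdNormalCDF z ≤ 1 := by
  have := one_sub_cdf z
  have h2 : 0 ≤ ∫ u in Set.Ioi z, stdNormalPDF u :=
    setIntegral_nonneg measurableSet_Ioi fun u _ => pdf_nonneg u
  linarith

lemma one_sub_cdf_nonneg (z : ℝ) : 0 ≤ 1 - stdNormalCDF z := by linarith [cdf_le_one z]

lemma hasDerivAt_cdf (x : ℝ) : HasDerivAt stdNormalCDF (stdNormalPDF x) x := by
  have key : ∀ z : ℝ, stdNormalCDF z = stdNormalCDF 0 + ∫ u in (0:ℝ)..z, stdNormalPDF u := by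
    intro z
    have := intervalIntegral.integral_Iic_sub_Iic (μ := volume) (a := (0:ℝ)) (b := z)
      pdf_integrable.integrableOn pdf_integrable.integrableOn
    unfold stdNormalCDF
    linarith
  have h1 : HasDerivAt (fun z => stdNormalCDF 0 + ∫ u in (0:ℝ)..z, stdNormalPDF u)
      (stdNormalPDF x) x := by
    apply HasDerivAt.const_add
    exact intervalIntegral.integral_hasDerivAt_right
      (pdf_integrable.intervalIntegrable)
      (pdf_continuous.stronglyMeasurableAtFilter _ _)
      pdf_continuous.continuousAt
  exact h1.congr_of_eventuallyEq (Eventually.of_forall fun z => (key z))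

lemma cdf_continuous : Continuous stdNormalCDF :=
  continuous_iff_continuousAt.mpr fun x => (hasDerivAt_cdf x).continuousAt

lemma hasDerivAt_pdf (x : ℝ) : HasDerivAt stdNormalPDF (-x * stdNormalPDF x) x := by
  unfold stdNormalPDF
  have h1 : HasDerivAt (fun u : ℝ => -u ^ 2 / 2) (-x) x := by
    have h0 : HasDerivAt (fun u : ℝ => -u ^ 2 / 2) (-(2 * x ^ 1) / 2) x :=
      (((hasDerivAt_pow 2 x).neg).div_const 2)
    convert h0 using 1
    ring
  have h2 := (h1.exp).div_const (Real.sqrt (2 * Real.pi))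
  exact h2.congr_deriv (by ring)

-- limits
lemma tendsto_cdf_atBot : Tendsto stdNormalCDF atBot (𝓝 0) := by
  apply squeeze_zero (fun z => cdf_nonneg z) (fun z => cdf_le z)
  simpa using (Real.tendsto_exp_atBot.const_mul C)

lemma tendsto_cdf_atTop : Tendsto stdNormalCDF atTop (𝓝 1) := by
  have h : Tendsto (fun z => 1 - stdNormalCDF z) atTop (𝓝 0) := by
    apply squeeze_zero (fun z => one_sub_cdf_nonneg z) (fun z => one_sub_cdf_le z)
    have : Tendsto (fun z : ℝ => Real.exp (-z)) atTop (𝓝 0) :=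
      Real.tendsto_exp_atBot.comp tendsto_neg_atTop_atBot
    simpa using this.const_mul C
  have := h.const_sub 1
  simpa using this

lemma tendsto_pdf_atBot : Tendsto stdNormalPDF atBot (𝓝 0) := by
  apply squeeze_zero (fun z => pdf_nonneg z) (fun z => (pdf_le_exp z))
  simpa using (Real.tendsto_exp_atBot.const_mul C)

lemma tendsto_pdf_atTop : Tendsto stdNormalPDF atTop (𝓝 0) := by
  apply squeeze_zero (fun z => pdf_nonneg z) (fun z => (pdf_le_exp_neg z))
  have : Tendsto (fun z : ℝ => Real.exp (-z)) atTop (𝓝 0) :=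
    Real.tendsto_exp_atBot.comp tendsto_neg_atTop_atBot
  simpa using this.const_mul C

-- z * exp z → 0 at -∞
lemma tendsto_id_mul_exp_atBot : Tendsto (fun z : ℝ => z * Real.exp z) atBot (𝓝 0) := by
  have h := Real.tendsto_pow_mul_exp_neg_atTop_nhds_zero 1
  have h2 : Tendsto (fun z : ℝ => (-z) ^ 1 * Real.exp (-(-z))) atBot (𝓝 0) := by
    exact h.comp tendsto_neg_atBot_atTop
  have h3 := h2.neg
  simp only [pow_one, neg_neg, neg_mul, neg_neg] at h3
  simpa using h3


lemma sqrt_pi_pos : 0 < Real.sqrt Real.pi := Real.sqrt_pos.mpr Real.pi_pos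

lemma sqrt_two_mul_pdf (z : ℝ) :
    Real.sqrt 2 * stdNormalPDF (Real.sqrt 2 * z)
      = 2 * Real.sqrt Real.pi * stdNormalPDF z ^ 2 := by
  unfold stdNormalPDF
  have h2 : Real.sqrt 2 * z * (Real.sqrt 2 * z) = 2 * z ^ 2 := by
    have : Real.sqrt 2 * Real.sqrt 2 = 2 := Real.mul_self_sqrt (by norm_num)
    nlinarith [this]
  have hsq : (Real.sqrt 2 * z) ^ 2 = 2 * z ^ 2 := by rw [sq]; exact h2
  rw [hsq]
  have hexp : Real.exp (-(2 * z ^ 2) / 2) = Real.exp (-z ^ 2 / 2) ^ 2 := by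
    rw [← Real.exp_nat_mul]
    congr 1
    push_cast
    ring
  rw [hexp]
  have hsplit : Real.sqrt (2 * Real.pi) = Real.sqrt 2 * Real.sqrt Real.pi :=
    Real.sqrt_mul (by norm_num) _
  have hpi : Real.sqrt Real.pi * Real.sqrt Real.pi = Real.pi := Real.mul_self_sqrt Real.pi_pos.le
  have h2' : Real.sqrt 2 * Real.sqrt 2 = 2 := Real.mul_self_sqrt (by norm_num)
  rw [div_pow, hsplit]
  field_simp
  linear_combination h2'

lemma hasDerivAt_cdf_sqrt_two (z : ℝ) :
    HasDerivAt (fun z => stdNormalCDF (Real.sqrt 2 * z))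
      (2 * Real.sqrt Real.pi * stdNormalPDF z ^ 2) z := by
  have h := (hasDerivAt_cdf (Real.sqrt 2 * z)).comp z
    ((hasDerivAt_id z).const_mul (Real.sqrt 2))
  simp only [mul_one] at h
  rw [← sqrt_two_mul_pdf z]
  exact h.congr_deriv (by ring)

/-- antiderivative of `Φ²` -/
noncomputable def gg (z : ℝ) : ℝ :=
  z * stdNormalCDF z ^ 2 + 2 * stdNormalPDF z * stdNormalCDF z
    - (1 / Real.sqrt Real.pi) * stdNormalCDF (Real.sqrt 2 * z)

lemma hasDerivAt_gg (z : ℝ) : HasDerivAt gg (stdNormalCDF z ^ 2) z := by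
  have d1 : HasDerivAt (fun z => z * stdNormalCDF z ^ 2)
      (stdNormalCDF z ^ 2 + z * (2 * stdNormalCDF z ^ 1 * stdNormalPDF z)) z := by
    exact ((hasDerivAt_id z).mul ((hasDerivAt_cdf z).pow 2)).congr_deriv (by norm_num)
  have d2 : HasDerivAt (fun z => 2 * stdNormalPDF z * stdNormalCDF z)
      (2 * ((-z * stdNormalPDF z) * stdNormalCDF z + stdNormalPDF z * stdNormalPDF z)) z := by
    have := ((hasDerivAt_pdf z).mul (hasDerivAt_cdf z)).const_mul 2
    exact this.congr_of_eventuallyEq (Eventually.of_forall fun u => by simp only [Pi.mul_apply]; ring)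
  have d3 := (hasDerivAt_cdf_sqrt_two z).const_mul (1 / Real.sqrt Real.pi)
  have d := (d1.add d2).sub d3
  have hne : Real.sqrt Real.pi ≠ 0 := ne_of_gt sqrt_pi_pos
  exact d.congr_deriv (by field_simp; ring)

lemma tendsto_sqrt_two_mul_atBot : Tendsto (fun z : ℝ => Real.sqrt 2 * z) atBot atBot :=
  tendsto_const_mul_atBot_of_pos (Real.sqrt_pos.mpr (by norm_num)) |>.mpr tendsto_id

lemma tendsto_sqrt_two_mul_atTop : Tendsto (fun z : ℝ => Real.sqrt 2 * z) atTop atTop :=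
  tendsto_const_mul_atTop_of_pos (Real.sqrt_pos.mpr (by norm_num)) |>.mpr tendsto_id

lemma tendsto_x_cdf_sq_atBot : Tendsto (fun z : ℝ => z * stdNormalCDF z ^ 2) atBot (𝓝 0) := by
  have hlow : Tendsto (fun z : ℝ => (C ^ 2 / 2) * ((2 * z) * Real.exp (2 * z))) atBot (𝓝 0) := by
    have h2z : Tendsto (fun z : ℝ => 2 * z) atBot atBot :=
      tendsto_const_mul_atBot_of_pos two_pos |>.mpr tendsto_id
    have := (tendsto_id_mul_exp_atBot.comp h2z).const_mul (C ^ 2 / 2)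
    simpa using this
  apply tendsto_of_tendsto_of_tendsto_of_le_of_le' hlow tendsto_const_nhds
  · filter_upwards [eventually_le_atBot (0:ℝ)] with z hz
    have h1 : stdNormalCDF z ^ 2 ≤ (C * Real.exp z) ^ 2 := by
      apply pow_le_pow_left₀ (cdf_nonneg z) (cdf_le z)
    have hc : (C ^ 2 / 2) * ((2 * z) * Real.exp (2 * z)) = z * (C * Real.exp z) ^ 2 := by
      rw [mul_pow, ← Real.exp_nat_mul]
      push_cast
      ring_nf
    rw [hc]
    exact mul_le_mul_of_nonpos_left h1 hz
  · filter_upwards [eventually_le_atBot (0:ℝ)] with z hz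
    exact mul_nonpos_of_nonpos_of_nonneg hz (sq_nonneg _)

lemma tendsto_gg_atBot : Tendsto gg atBot (𝓝 0) := by
  have h2 : Tendsto (fun z => 2 * stdNormalPDF z * stdNormalCDF z) atBot (𝓝 0) := by
    have := (tendsto_pdf_atBot.const_mul 2).mul tendsto_cdf_atBot
    simpa using this
  have h3 : Tendsto (fun z => (1 / Real.sqrt Real.pi) * stdNormalCDF (Real.sqrt 2 * z))
      atBot (𝓝 0) := by
    have := (tendsto_cdf_atBot.comp tendsto_sqrt_two_mul_atBot).const_mul (1 / Real.sqrt Real.pi)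
    simpa using this
  have h := (tendsto_x_cdf_sq_atBot.add h2).sub h3
  unfold gg
  simpa using h

lemma integrableOn_cdf_sq_Iic (z : ℝ) :
    IntegrableOn (fun u => stdNormalCDF u ^ 2) (Set.Iic z) := by
  apply Integrable.mono' (((integrableOn_exp_Iic z).const_mul C))
    ((cdf_continuous.pow 2).aestronglyMeasurable.restrict)
  filter_upwards with u
  rw [Real.norm_eq_abs, abs_of_nonneg (sq_nonneg _)]
  calc stdNormalCDF u ^ 2 ≤ stdNormalCDF u * 1 := by
        rw [sq]; exact mul_le_mul_of_nonneg_left (cdf_le_one u) (cdf_nonneg u)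
    _ = stdNormalCDF u := mul_one _
    _ ≤ C * Real.exp u := cdf_le u

lemma integral_cdf_sq_Iic (z : ℝ) :
    ∫ u in Set.Iic z, stdNormalCDF u ^ 2 = gg z := by
  have := integral_Iic_of_hasDerivAt_of_tendsto' (fun x _ => hasDerivAt_gg x)
    (integrableOn_cdf_sq_Iic z) tendsto_gg_atBot
  simpa using this

/-- antiderivative of `(1-Φ)²` -/
noncomputable def hh (z : ℝ) : ℝ :=
  z * (1 - stdNormalCDF z) ^ 2 - 2 * stdNormalPDF z * (1 - stdNormalCDF z)
    - (1 / Real.sqrt Real.pi) * stdNormalCDF (Real.sqrt 2 * z)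

lemma hasDerivAt_hh (z : ℝ) : HasDerivAt hh ((1 - stdNormalCDF z) ^ 2) z := by
  have dc : HasDerivAt (fun z => 1 - stdNormalCDF z) (-stdNormalPDF z) z :=
    (hasDerivAt_cdf z).const_sub 1
  have d1 : HasDerivAt (fun z => z * (1 - stdNormalCDF z) ^ 2)
      ((1 - stdNormalCDF z) ^ 2 + z * (2 * (1 - stdNormalCDF z) ^ 1 * (-stdNormalPDF z))) z := by
    exact ((hasDerivAt_id z).mul (dc.pow 2)).congr_deriv (by norm_num)
  have d2 : HasDerivAt (fun z => 2 * stdNormalPDF z * (1 - stdNormalCDF z))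
      (2 * ((-z * stdNormalPDF z) * (1 - stdNormalCDF z)
        + stdNormalPDF z * (-stdNormalPDF z))) z := by
    have := ((hasDerivAt_pdf z).mul dc).const_mul 2
    exact this.congr_of_eventuallyEq (Eventually.of_forall fun u => by simp only [Pi.mul_apply]; ring)
  have d3 := (hasDerivAt_cdf_sqrt_two z).const_mul (1 / Real.sqrt Real.pi)
  have d := (d1.sub d2).sub d3
  have hne : Real.sqrt Real.pi ≠ 0 := ne_of_gt sqrt_pi_pos
  exact d.congr_deriv (by field_simp; ring)

lemma tendsto_x_one_sub_cdf_sq_atTop :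
    Tendsto (fun z : ℝ => z * (1 - stdNormalCDF z) ^ 2) atTop (𝓝 0) := by
  have hup : Tendsto (fun z : ℝ => (C ^ 2 / 2) * ((2 * z) * Real.exp (-(2 * z)))) atTop (𝓝 0) := by
    have h1 : Tendsto (fun x : ℝ => x * Real.exp (-x)) atTop (𝓝 0) := by
      simpa using Real.tendsto_pow_mul_exp_neg_atTop_nhds_zero 1
    have h2z : Tendsto (fun z : ℝ => 2 * z) atTop atTop :=
      tendsto_const_mul_atTop_of_pos two_pos |>.mpr tendsto_id
    have := (h1.comp h2z).const_mul (C ^ 2 / 2)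
    simpa using this
  apply tendsto_of_tendsto_of_tendsto_of_le_of_le' tendsto_const_nhds hup
  · filter_upwards [eventually_ge_atTop (0:ℝ)] with z hz
    exact mul_nonneg hz (sq_nonneg _)
  · filter_upwards [eventually_ge_atTop (0:ℝ)] with z hz
    have h1 : (1 - stdNormalCDF z) ^ 2 ≤ (C * Real.exp (-z)) ^ 2 :=
      pow_le_pow_left₀ (one_sub_cdf_nonneg z) (one_sub_cdf_le z) 2
    have hc : (C ^ 2 / 2) * ((2 * z) * Real.exp (-(2 * z))) = z * (C * Real.exp (-z)) ^ 2 := by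
      rw [mul_pow, ← Real.exp_nat_mul]
      push_cast
      ring_nf
    rw [hc]
    exact mul_le_mul_of_nonneg_left h1 hz

lemma tendsto_hh_atTop : Tendsto hh atTop (𝓝 (-(1 / Real.sqrt Real.pi))) := by
  have h2 : Tendsto (fun z => 2 * stdNormalPDF z * (1 - stdNormalCDF z)) atTop (𝓝 0) := by
    have := (tendsto_pdf_atTop.const_mul 2).mul (tendsto_cdf_atTop.const_sub 1)
    simpa using this
  have h3 : Tendsto (fun z => (1 / Real.sqrt Real.pi) * stdNormalCDF (Real.sqrt 2 * z))
      atTop (𝓝 (1 / Real.sqrt Real.pi)) := by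
    have := (tendsto_cdf_atTop.comp tendsto_sqrt_two_mul_atTop).const_mul (1 / Real.sqrt Real.pi)
    simpa using this
  have h := (tendsto_x_one_sub_cdf_sq_atTop.sub h2).sub h3
  unfold hh
  simpa using h

lemma integrableOn_one_sub_cdf_sq_Ioi (z : ℝ) :
    IntegrableOn (fun u => (1 - stdNormalCDF u) ^ 2) (Set.Ioi z) := by
  have hexp : IntegrableOn (fun u : ℝ => Real.exp (-u)) (Set.Ioi z) :=
    (exp_neg_integrableOn_Ioi z one_pos).congr_fun (fun x _ => by simp only [neg_one_mul]) measurableSet_Ioi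
  apply Integrable.mono' (hexp.const_mul C)
    (((continuous_const.sub cdf_continuous).pow 2).aestronglyMeasurable.restrict)
  filter_upwards with u
  rw [Real.norm_eq_abs, abs_of_nonneg (sq_nonneg _)]
  calc (1 - stdNormalCDF u) ^ 2 ≤ (1 - stdNormalCDF u) * 1 := by
        rw [sq]
        apply mul_le_mul_of_nonneg_left _ (one_sub_cdf_nonneg u)
        linarith [cdf_nonneg u]
    _ = 1 - stdNormalCDF u := mul_one _
    _ ≤ C * Real.exp (-u) := one_sub_cdf_le u

lemma integral_one_sub_cdf_sq_Ioi (z : ℝ) :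
    ∫ u in Set.Ioi z, (1 - stdNormalCDF u) ^ 2 = -(1 / Real.sqrt Real.pi) - hh z := by
  have := integral_Ioi_of_hasDerivAt_of_tendsto' (fun x _ => hasDerivAt_hh x)
    (integrableOn_one_sub_cdf_sq_Ioi z) tendsto_hh_atTop
  simpa using this

lemma crps_std (z : ℝ) :
    ∫ u : ℝ, (stdNormalCDF u - (if z ≤ u then (1:ℝ) else 0)) ^ 2
      = z * (2 * stdNormalCDF z - 1) + 2 * stdNormalPDF z - 1 / Real.sqrt Real.pi := by
  set G : ℝ → ℝ := fun u => (stdNormalCDF u - (if z ≤ u then (1:ℝ) else 0)) ^ 2 with hG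
  have hIio : ∀ u ∈ Set.Iio z, G u = stdNormalCDF u ^ 2 := by
    intro u hu
    simp only [hG, if_neg (not_le.mpr (Set.mem_Iio.mp hu)), sub_zero]
  have hIci : ∀ u ∈ Set.Ici z, G u = (1 - stdNormalCDF u) ^ 2 := by
    intro u hu
    simp only [hG, if_pos (Set.mem_Ici.mp hu)]
    ring
  have hint1 : IntegrableOn G (Set.Iio z) := by
    apply IntegrableOn.congr_fun ((integrableOn_cdf_sq_Iic z).mono_set Set.Iio_subset_Iic_self)
      (fun u hu => (hIio u hu).symm) measurableSet_Iio
  have hint2 : IntegrableOn G (Set.Ici z) := by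
    have h1 : IntegrableOn (fun u => (1 - stdNormalCDF u) ^ 2) (Set.Ici z) := by
      rw [IntegrableOn, ← restrict_Ioi_eq_restrict_Ici]
      exact integrableOn_one_sub_cdf_sq_Ioi z
    exact IntegrableOn.congr_fun h1 (fun u hu => (hIci u hu).symm) measurableSet_Ici
  have hsplit := intervalIntegral.integral_Iio_add_Ici (μ := volume) (b := z) hint1 hint2
  rw [← hsplit]
  have e1 : ∫ u in Set.Iio z, G u = gg z := by
    rw [setIntegral_congr_fun measurableSet_Iio hIio,
      ← integral_Iic_eq_integral_Iio, integral_cdf_sq_Iic]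
  have e2 : ∫ u in Set.Ici z, G u = -(1 / Real.sqrt Real.pi) - hh z := by
    rw [setIntegral_congr_fun measurableSet_Ici hIci,
      integral_Ici_eq_integral_Ioi, integral_one_sub_cdf_sq_Ioi]
  rw [e1, e2]
  unfold gg hh
  ring

theorem crps_gaussian_closed_form' (m σ y : ℝ) (hσ : 0 < σ) :
    (∫ t : ℝ, (stdNormalCDF ((t - m) / σ) - (if y ≤ t then (1 : ℝ) else 0)) ^ 2) =
      σ * (((y - m) / σ) * (2 * stdNormalCDF ((y - m) / σ) - 1)
        + 2 * stdNormalPDF ((y - m) / σ) - 1 / Real.sqrt Real.pi) := by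
  set z : ℝ := (y - m) / σ with hz
  set G : ℝ → ℝ := fun u => (stdNormalCDF u - (if z ≤ u then (1:ℝ) else 0)) ^ 2 with hG
  have key : ∀ t : ℝ, (stdNormalCDF ((t - m) / σ) - (if y ≤ t then (1 : ℝ) else 0)) ^ 2
      = G ((t - m) / σ) := by
    intro t
    have : (y ≤ t) ↔ (z ≤ (t - m) / σ) := by
      rw [hz, div_le_div_iff_of_pos_right hσ]
      constructor <;> intro h <;> linarith
    simp only [hG]
    by_cases h : y ≤ t
    · rw [if_pos h, if_pos (this.mp h)]
    · rw [if_neg h, if_neg (fun hc => h (this.mpr hc))]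
  simp_rw [key]
  have step1 : (∫ t : ℝ, G ((t - m) / σ)) = ∫ t : ℝ, G (t / σ) := by
    exact integral_sub_right_eq_self (fun s => G (s / σ)) m
  have step2 : (∫ t : ℝ, G (t / σ)) = |σ| • ∫ u : ℝ, G u :=
    MeasureTheory.Measure.integral_comp_div G σ
  rw [step1, step2, abs_of_pos hσ, smul_eq_mul, crps_std z]
end CRPSAux

/-- Closed-form CRPS of the Gaussian `N(m, σ²)` at the observation `y`. -/
theorem crps_gaussian_closed_form (m σ y : ℝ) (hσ : 0 < σ) :
    (∫ t : ℝ, (stdNormalCDF ((t - m) / σ) - (if y ≤ t then (1 : ℝ) else 0)) ^ 2) =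
      σ * (((y - m) / σ) * (2 * stdNormalCDF ((y - m) / σ) - 1)
        + 2 * stdNormalPDF ((y - m) / σ) - 1 / Real.sqrt Real.pi) := by
  exact CRPSAux.crps_gaussian_closed_form' m σ y hσ
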